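/- For all real numbers λ and β with 0 < λ < 1 and 0 ≤ β < 1, the quantity h₃(β,λ) = √(1−λ)·(1−β)·β²/(λ − 2λβ + β²) is well defined (the denominator is positive) and satisfies h₃(β,λ) ≤ 1. -/
import Mathlib


/-- For `0 < λ < 1` and `0 ≤ β < 1`, the denominator `λ - 2λβ + β²` is
positive and `h₃(β,λ) = √(1-λ)·(1-β)·β²/(λ - 2λβ + β²) ≤ 1`. -/
theorem h3_bound (lam β : ℝ) (hlam0 : 0 < lam) (hlam1 : lam < 1)
    (hβ0 : 0 ≤ β) (hβ1 : β < 1) :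
    0 < lam - 2 * lam * β + β ^ 2 ∧
      Real.sqrt (1 - lam) * (1 - β) * β ^ 2 / (lam - 2 * lam * β + β ^ 2) ≤ 1 := by
  have hden : 0 < lam - 2 * lam * β + β ^ 2 := by nlinarith [sq_nonneg (β - lam)]
  refine ⟨hden, ?_⟩
  rw [div_le_one hden]
  set s := Real.sqrt (1 - lam) with hs
  have hs0 : 0 ≤ s := Real.sqrt_nonneg _
  have hs2 : s ^ 2 = 1 - lam := Real.sq_sqrt (by linarith)
  have hs1 : s ≤ 1 := by nlinarith [hs2]
  have key : 0 ≤ s * β ^ 2 * (s + β - 1) + (1 - s) * (1 - β) ^ 2 := by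
    rcases le_or_gt (1 - β) s with h | h
    · have : 0 ≤ s + β - 1 := by linarith
      have h1 : 0 ≤ s * β ^ 2 * (s + β - 1) :=
        mul_nonneg (mul_nonneg hs0 (sq_nonneg β)) this
      nlinarith [mul_nonneg (sub_nonneg.mpr hs1) (sq_nonneg (1 - β))]
    · -- s < 1 - β : need (1-s)(1-β)² ≥ s β² (1-s-β)
      nlinarith [mul_nonneg (mul_nonneg hs0 (sq_nonneg β)) (by linarith : (0:ℝ) ≤ 1 - s - β),
        mul_nonneg (sub_nonneg.mpr hβ1.le) (sq_nonneg (1 - β)),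
        mul_nonneg (mul_nonneg (sub_nonneg.mpr hβ1.le) hβ0) (sub_nonneg.mpr hβ1.le),
        mul_nonneg hs0 (sub_nonneg.mpr hs1), sq_nonneg (s - β), sq_nonneg (s + β - 1)]
  have key2 : 0 ≤ s * (1 - s) * (1 - β) ^ 2 :=
    mul_nonneg (mul_nonneg hs0 (by linarith)) (sq_nonneg _)
  nlinarith [key, key2, hs2]
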